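/- Let str be a linear functional on the group algebra of the dihedral group D_n that is a class function on group elements. Suppose additionally str satisfies the n linear constraints (from equation (strT)): str(R_k) = -((ν₀+ν₁)/2)·str(Q_0 + (Q_1+Q_{-1})/2) + (-1)^k·((ν₀-ν₁)/2)·str(Q_{n/2} + (Q_{n/2+1}+Q_{n/2-1})/2) for all k (terms with index n/2 present only when n is even), and when n is even also str(S_{n/2}) = -(1/2)·str((ν₀+ν₁)L_0 - (-1)^{n/2}(ν₀-ν₁)L_{n/2}). Then str is uniquely determined by its values on the rotations S_j with j ≠ n/2, and the space of such functionals has dimension ⌊(n+1)/2⌋. -/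

import Mathlib

open Complex DihedralGroup MonoidAlgebra

/-- `L_p = Σ_k λ^{kp} R_k` in `ℂ[W(I_2(n))]`, with reflections `R_k = sr (-k)`. -/
noncomputable def Lelt (n : ℕ) [NeZero n] (lam : ℂ) (p : ZMod n) :
    MonoidAlgebra ℂ (DihedralGroup n) :=
  ∑ k : ZMod n, (lam ^ ((k.val * p.val : ℕ) : ℤ)) • of ℂ (DihedralGroup n) (sr (-k))

/-- `Q_p = Σ_k λ^{-kp} S_k` in `ℂ[W(I_2(n))]`, with rotations `S_k = r k`. -/
noncomputable def Qelt (n : ℕ) [NeZero n] (lam : ℂ) (p : ZMod n) :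
    MonoidAlgebra ℂ (DihedralGroup n) :=
  ∑ k : ZMod n, (lam ^ (-((k.val * p.val : ℕ) : ℤ))) • of ℂ (DihedralGroup n) (r k)

/-- A functional on `ℂ[W(I_2(n))]` which is a class function on group elements and
satisfies the constraints (strT) and (strS2) of the paper. -/
noncomputable def Admissible (n : ℕ) [NeZero n] (lam ν₀ ν₁ : ℂ)
    (φ : MonoidAlgebra ℂ (DihedralGroup n) →ₗ[ℂ] ℂ) : Prop :=
  let h : ZMod n := ((n / 2 : ℕ) : ZMod n)
  (∀ g g' : DihedralGroup n, φ (of ℂ _ (g' * g * g'⁻¹)) = φ (of ℂ _ g)) ∧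
  (∀ k : ZMod n, φ (of ℂ _ (sr (-k))) =
      -((ν₀ + ν₁) / 2) *
          (φ (Qelt n lam 0) + (φ (Qelt n lam 1) + φ (Qelt n lam (-1))) / 2)
      + (-1 : ℂ) ^ k.val * ((ν₀ - ν₁) / 2) *
          (φ (Qelt n lam h) + (φ (Qelt n lam (h + 1)) + φ (Qelt n lam (h - 1))) / 2)) ∧
  (Even n → φ (of ℂ _ (r h)) =
      -(1 / 2) * φ ((ν₀ + ν₁) • Lelt n lam 0
        - ((-1 : ℂ) ^ (n / 2) * (ν₀ - ν₁)) • Lelt n lam h))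


set_option linter.unusedSectionVars false
set_option linter.unusedVariables false

section Zet
variable (n : ℕ) [NeZero n] (lam : ℂ)

/-- the character value -/
noncomputable def zet (x : ZMod n) : ℂ := lam ^ (x.val : ℤ)

variable {n lam}

lemma val_natCast (i : ZMod n) : ((i.val : ℕ) : ZMod n) = i := by
  rw [ZMod.natCast_val, ZMod.cast_id]

lemma lam_ne_zero (hone : lam ^ (n : ℤ) = 1) : lam ≠ 0 := by
  intro h; rw [h] at hone; simp [NeZero.ne n] at hone

lemma zpow_congr (hone : lam ^ (n : ℤ) = 1) {s t : ℤ}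
    (h : (s : ZMod n) = (t : ZMod n)) : lam ^ s = lam ^ t := by
  have hdvd : (n : ℤ) ∣ s - t := by
    rwa [← ZMod.intCast_zmod_eq_zero_iff_dvd, Int.cast_sub, sub_eq_zero]
  obtain ⟨u, hu⟩ := hdvd
  have hs : s = t + n * u := by linarith
  rw [hs, zpow_add₀ (lam_ne_zero hone), zpow_mul, hone, one_zpow, mul_one]

lemma zet_eq (hone : lam ^ (n : ℤ) = 1) (s : ℤ) :
    lam ^ s = zet n lam ((s : ZMod n)) := by
  apply zpow_congr hone
  simp [val_natCast]

lemma zet_add (hone : lam ^ (n : ℤ) = 1) (x y : ZMod n) :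
    zet n lam (x + y) = zet n lam x * zet n lam y := by
  have h1 : zet n lam (x + y) = lam ^ ((x.val : ℤ) + y.val) := by
    rw [zet_eq hone]; push_cast [val_natCast]; ring_nf
  rw [h1, zpow_add₀ (lam_ne_zero hone)]; rfl

lemma zet_zero : zet n lam 0 = 1 := by simp [zet, ZMod.val_zero]

lemma zet_natmul (hone : lam ^ (n : ℤ) = 1) (m : ℕ) (x : ZMod n) :
    zet n lam ((m : ZMod n) * x) = zet n lam x ^ m := by
  induction m with
  | zero => simp [zet_zero]
  | succ k ih => push_cast; rw [add_mul, one_mul, zet_add hone, ih, pow_succ]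

lemma zet_neg (hone : lam ^ (n : ℤ) = 1) (x : ZMod n) :
    zet n lam (-x) = (zet n lam x)⁻¹ := by
  have := zet_add hone x (-x)
  simp only [add_neg_cancel, zet_zero] at this
  exact eq_inv_of_mul_eq_one_right this.symm

lemma hone_of (hlam : lam = Complex.exp (2 * Real.pi * I / n)) : lam ^ (n : ℤ) = 1 := by
  have hn0 : (n : ℂ) ≠ 0 := Nat.cast_ne_zero.mpr (NeZero.ne n)
  rw [hlam, zpow_natCast, ← Complex.exp_nat_mul]
  rw [show (n : ℂ) * (2 * Real.pi * I / n) = 2 * Real.pi * I by field_simp]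
  exact Complex.exp_two_pi_mul_I

lemma zet_h (hlam : lam = Complex.exp (2 * Real.pi * I / n)) (heven : Even n) :
    zet n lam ((n / 2 : ℕ) : ZMod n) = -1 := by
  have hn2 : n / 2 < n := Nat.div_lt_self (Nat.pos_of_ne_zero (NeZero.ne n)) one_lt_two
  have hval : (((n / 2 : ℕ) : ZMod n)).val = n / 2 := ZMod.val_cast_of_lt hn2
  have hn0 : (n : ℂ) ≠ 0 := Nat.cast_ne_zero.mpr (NeZero.ne n)
  have h2 : ((n / 2 : ℕ) : ℂ) * 2 = (n : ℂ) := by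
    obtain ⟨t, ht⟩ := heven
    have h1 : n / 2 = t := by omega
    rw [h1, ht]; push_cast; ring
  rw [zet, hval, hlam, zpow_natCast, ← Complex.exp_nat_mul]
  rw [show ((n/2 : ℕ) : ℂ) * (2 * Real.pi * I / n) = Real.pi * I by
    rw [mul_div_assoc', div_eq_iff hn0]; linear_combination (Real.pi : ℂ) * I * h2]
  exact Complex.exp_pi_mul_I

lemma zet_mul_h (hlam : lam = Complex.exp (2 * Real.pi * I / n)) (heven : Even n) (k : ZMod n) :
    zet n lam (k * ((n / 2 : ℕ) : ZMod n)) = (-1 : ℂ) ^ k.val := by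
  have hone := hone_of (n := n) hlam
  rw [← val_natCast k, zet_natmul hone, zet_h hlam heven, val_natCast]

lemma eps_add (hlam : lam = Complex.exp (2 * Real.pi * I / n)) (heven : Even n) (j k : ZMod n) :
    (-1 : ℂ) ^ (j + k).val = (-1 : ℂ) ^ j.val * (-1 : ℂ) ^ k.val := by
  have hone := hone_of (n := n) hlam
  rw [← zet_mul_h hlam heven, ← zet_mul_h hlam heven, ← zet_mul_h hlam heven,
    add_mul, zet_add hone]

lemma eps_sq (k : ZMod n) : (-1 : ℂ) ^ k.val * (-1 : ℂ) ^ k.val = 1 := by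
  rw [← pow_add]; exact Even.neg_one_pow ⟨k.val, rfl⟩

lemma eps_neg (hlam : lam = Complex.exp (2 * Real.pi * I / n)) (heven : Even n) (k : ZMod n) :
    (-1 : ℂ) ^ (-k).val = (-1 : ℂ) ^ k.val := by
  have h := eps_add hlam heven k (-k)
  simp only [add_neg_cancel, ZMod.val_zero, pow_zero] at h
  calc (-1 : ℂ) ^ (-k).val
      = ((-1:ℂ)^k.val * (-1:ℂ)^k.val) * (-1 : ℂ) ^ (-k).val := by rw [eps_sq, one_mul]
    _ = (-1:ℂ)^k.val * ((-1:ℂ)^k.val * (-1 : ℂ) ^ (-k).val) := by ring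
    _ = (-1:ℂ)^k.val := by rw [← h, mul_one]

lemma sum_zmod (g : ℕ → ℂ) :
    ∑ k : ZMod n, g k.val = ∑ i ∈ Finset.range n, g i := by
  refine Finset.sum_nbij' (i := fun k => k.val) (j := fun i => (i : ZMod n))
    ?_ ?_ ?_ ?_ ?_ <;> intro a ha
  · exact Finset.mem_range.mpr (ZMod.val_lt a)
  · exact Finset.mem_univ _
  · exact val_natCast a
  · exact ZMod.val_cast_of_lt (Finset.mem_range.mp ha)
  · rfl

lemma sum_eps (heven : Even n) : ∑ k : ZMod n, (-1 : ℂ) ^ k.val = 0 := by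
  rw [sum_zmod (fun i => (-1:ℂ)^i), neg_one_geom_sum, if_pos heven]

lemma phi_Q (hone : lam ^ (n : ℤ) = 1)
    (φ : MonoidAlgebra ℂ (DihedralGroup n) →ₗ[ℂ] ℂ) (p : ZMod n) :
    φ (Qelt n lam p) = ∑ k : ZMod n, zet n lam (-(k * p)) * φ (of ℂ _ (r k)) := by
  rw [Qelt, map_sum]
  refine Finset.sum_congr rfl fun k _ => ?_
  rw [map_smul, smul_eq_mul]
  congr 1
  rw [zet_eq hone]
  congr 1
  push_cast [val_natCast]
  ring

lemma phi_L (hone : lam ^ (n : ℤ) = 1)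
    (φ : MonoidAlgebra ℂ (DihedralGroup n) →ₗ[ℂ] ℂ) (p : ZMod n) :
    φ (Lelt n lam p) = ∑ k : ZMod n, zet n lam (k * p) * φ (of ℂ _ (sr (-k))) := by
  rw [Lelt, map_sum]
  refine Finset.sum_congr rfl fun k _ => ?_
  rw [map_smul, smul_eq_mul]
  congr 1
  rw [zet_eq hone]
  congr 1
  push_cast [val_natCast]
  ring

end Zet

section Main
variable {n : ℕ} [NeZero n] {lam ν₀ ν₁ : ℂ}

lemma eq_zero_of_vanish (σ : MonoidAlgebra ℂ (DihedralGroup n) →ₗ[ℂ] ℂ)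
    (hg : ∀ g : DihedralGroup n, σ (of ℂ _ g) = 0) : σ = 0 := by
  apply MonoidAlgebra.lhom_ext'
  intro g
  apply LinearMap.ext_ring
  show σ (MonoidAlgebra.single g 1) = 0
  rw [← MonoidAlgebra.of_apply, hg]

lemma h_add_h (heven : Even n) : ((n / 2 : ℕ) : ZMod n) + ((n / 2 : ℕ) : ZMod n) = 0 := by
  obtain ⟨t, ht⟩ := heven
  rw [← Nat.cast_add, show n / 2 + n / 2 = n by omega, ZMod.natCast_self]

lemma neg_h (heven : Even n) : -((n / 2 : ℕ) : ZMod n) = ((n / 2 : ℕ) : ZMod n) :=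
  neg_eq_of_add_eq_zero_left (h_add_h heven)

lemma h_val (heven : Even n) : (((n / 2 : ℕ) : ZMod n)).val = n / 2 :=
  ZMod.val_cast_of_lt (Nat.div_lt_self (Nat.pos_of_ne_zero (NeZero.ne n)) one_lt_two)

lemma vanish_lemma (hodd : Odd n → ν₀ = ν₁)
    (hlam : lam = Complex.exp (2 * Real.pi * I / n))
    (σ : MonoidAlgebra ℂ (DihedralGroup n) →ₗ[ℂ] ℂ)
    (hσ : Admissible n lam ν₀ ν₁ σ)
    (hval : ∀ j : ZMod n, (Even n → j ≠ ((n / 2 : ℕ) : ZMod n)) →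
      σ (of ℂ _ (r j)) = 0) : σ = 0 := by
  have hone := hone_of (n := n) hlam
  obtain ⟨hconj, hT, hS2⟩ := hσ
  by_cases heven : Even n
  · -- even case
    have hQ : ∀ p : ZMod n, σ (Qelt n lam p) =
        zet n lam (-(((n / 2 : ℕ) : ZMod n) * p)) * σ (of ℂ _ (r ((n / 2 : ℕ) : ZMod n))) := by
      intro p
      rw [phi_Q hone]
      rw [Finset.sum_eq_single ((n / 2 : ℕ) : ZMod n)]
      · intro k _ hk
        rw [hval k (fun _ => hk), mul_zero]
      · intro habs; exact absurd (Finset.mem_univ _) habs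
    have hzh : zet n lam ((n / 2 : ℕ) : ZMod n) = -1 := zet_h hlam heven
    have hzhh : zet n lam (((n / 2 : ℕ) : ZMod n) * ((n / 2 : ℕ) : ZMod n)) = (-1 : ℂ) ^ (n / 2) := by
      rw [zet_mul_h hlam heven, h_val heven]
    have hnegsq : -(((n / 2 : ℕ) : ZMod n) * ((n / 2 : ℕ) : ZMod n))
        = ((n / 2 : ℕ) : ZMod n) * ((n / 2 : ℕ) : ZMod n) := by
      have : ((n / 2 : ℕ) : ZMod n) * ((n / 2 : ℕ) : ZMod n)
          + ((n / 2 : ℕ) : ZMod n) * ((n / 2 : ℕ) : ZMod n) = 0 := by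
        rw [← add_mul, h_add_h heven, zero_mul]
      exact neg_eq_of_add_eq_zero_left this
    have hA : σ (Qelt n lam 0) + (σ (Qelt n lam 1) + σ (Qelt n lam (-1))) / 2 = 0 := by
      rw [hQ, hQ, hQ]
      rw [show -(((n / 2 : ℕ) : ZMod n) * (0 : ZMod n)) = 0 by ring,
        show -(((n / 2 : ℕ) : ZMod n) * (1 : ZMod n)) = -((n / 2 : ℕ) : ZMod n) by ring,
        show -(((n / 2 : ℕ) : ZMod n) * (-1 : ZMod n)) = ((n / 2 : ℕ) : ZMod n) by ring,
        neg_h heven, zet_zero, hzh]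
      ring
    have hB : σ (Qelt n lam ((n / 2 : ℕ) : ZMod n))
        + (σ (Qelt n lam (((n / 2 : ℕ) : ZMod n) + 1))
          + σ (Qelt n lam (((n / 2 : ℕ) : ZMod n) - 1))) / 2 = 0 := by
      rw [hQ, hQ, hQ]
      rw [show -(((n / 2 : ℕ) : ZMod n) * (((n / 2 : ℕ) : ZMod n) + 1))
            = -(((n / 2 : ℕ) : ZMod n) * ((n / 2 : ℕ) : ZMod n)) + -((n / 2 : ℕ) : ZMod n) by ring,
        show -(((n / 2 : ℕ) : ZMod n) * (((n / 2 : ℕ) : ZMod n) - 1))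
            = -(((n / 2 : ℕ) : ZMod n) * ((n / 2 : ℕ) : ZMod n)) + ((n / 2 : ℕ) : ZMod n) by ring,
        hnegsq, neg_h heven, zet_add hone, hzhh, hzh]
      ring
    have hrefl : ∀ k : ZMod n, σ (of ℂ _ (sr (-k))) = 0 := by
      intro k
      rw [hT k, hA, hB]
      ring
    have hrefl' : ∀ m : ZMod n, σ (of ℂ _ (sr m)) = 0 := by
      intro m
      have := hrefl (-m)
      rwa [neg_neg] at this
    have hLzero : ∀ p : ZMod n, σ (Lelt n lam p) = 0 := by
      intro p
      rw [phi_L hone]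
      apply Finset.sum_eq_zero
      intro k _
      rw [hrefl, mul_zero]
    have hxz : σ (of ℂ _ (r ((n / 2 : ℕ) : ZMod n))) = 0 := by
      rw [hS2 heven, map_sub, map_smul, map_smul, hLzero, hLzero]
      simp
    apply eq_zero_of_vanish
    intro g
    cases g with
    | r j =>
      by_cases hj : j = ((n / 2 : ℕ) : ZMod n)
      · rw [hj]; exact hxz
      · exact hval j (fun _ => hj)
    | sr m => exact hrefl' m
  · -- odd case
    have hoddn : Odd n := Nat.odd_iff.mpr (Nat.not_even_iff.mp heven)
    have hd : ν₀ - ν₁ = 0 := by rw [hodd hoddn]; ring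
    have hr0 : ∀ j : ZMod n, σ (of ℂ _ (r j)) = 0 := fun j =>
      hval j (fun he => absurd he heven)
    have hQ : ∀ p : ZMod n, σ (Qelt n lam p) = 0 := by
      intro p
      rw [phi_Q hone]
      apply Finset.sum_eq_zero
      intro k _
      rw [hr0, mul_zero]
    have hrefl : ∀ k : ZMod n, σ (of ℂ _ (sr (-k))) = 0 := by
      intro k
      rw [hT k, hQ, hQ, hQ, hQ, hQ, hQ, hd]
      ring
    apply eq_zero_of_vanish
    intro g
    cases g with
    | r j => exact hr0 j
    | sr m =>
      have := hrefl (-m)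
      rwa [neg_neg] at this

end Main

section Constr
variable (n : ℕ) [NeZero n] (lam ν₀ ν₁ : ℂ) (v : Fin ((n+1)/2) → ℂ)

noncomputable def vvFun (j : ZMod n) : ℂ :=
  if hj : j.val < (n+1)/2 then v ⟨j.val, hj⟩
  else if hj' : (-j).val < (n+1)/2 then v ⟨(-j).val, hj'⟩ else 0

noncomputable def wAFun (k : ZMod n) : ℂ := 1 + (zet n lam k + zet n lam (-k))/2

noncomputable def AvalC : ℂ := ∑ k : ZMod n, vvFun n v k * wAFun n lam k
noncomputable def BvalC : ℂ := ∑ k : ZMod n, (-1:ℂ)^k.val * vvFun n v k * wAFun n lam k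

noncomputable def aFunC (j : ZMod n) : ℂ :=
  if Even n ∧ j = ((n/2 : ℕ) : ZMod n) then
    (n : ℂ) * ((ν₀+ν₁)/2)^2 * AvalC n lam v
      + (-1:ℂ)^(n/2) * n * ((ν₀-ν₁)/2)^2 * BvalC n lam v
  else vvFun n v j

noncomputable def fFunC : DihedralGroup n → ℂ
  | DihedralGroup.r j => aFunC n lam ν₀ ν₁ v j
  | DihedralGroup.sr k => -((ν₀+ν₁)/2) * AvalC n lam v
      + (-1:ℂ)^k.val * ((ν₀-ν₁)/2) * BvalC n lam v

noncomputable def phiC : MonoidAlgebra ℂ (DihedralGroup n) →ₗ[ℂ] ℂ :=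
  Finsupp.linearCombination ℂ (fFunC n lam ν₀ ν₁ v) ∘ₗ
    (MonoidAlgebra.coeffLinearEquiv ℂ).toLinearMap

lemma fFunC_r (j : ZMod n) : fFunC n lam ν₀ ν₁ v (r j) = aFunC n lam ν₀ ν₁ v j := rfl

lemma fFunC_sr (k : ZMod n) : fFunC n lam ν₀ ν₁ v (sr k)
    = -((ν₀+ν₁)/2) * AvalC n lam v + (-1:ℂ)^k.val * ((ν₀-ν₁)/2) * BvalC n lam v := rfl

lemma phiC_of (g : DihedralGroup n) :
    phiC n lam ν₀ ν₁ v (of ℂ _ g) = fFunC n lam ν₀ ν₁ v g := by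
  rw [phiC, MonoidAlgebra.of_apply]
  show Finsupp.linearCombination ℂ (fFunC n lam ν₀ ν₁ v) (Finsupp.single g 1) = _
  rw [Finsupp.linearCombination_single, one_smul]

lemma vv_symm (j : ZMod n) : vvFun n v (-j) = vvFun n v j := by
  by_cases hj0 : j = 0
  · rw [hj0, neg_zero]
  · have hvn : (-j).val = n - j.val := by
      rw [ZMod.neg_val, if_neg hj0]
    have hv0 : j.val ≠ 0 := fun h => hj0 (ZMod.val_eq_zero j |>.mp h)
    have hvlt : j.val < n := ZMod.val_lt j
    rw [vvFun, vvFun, neg_neg]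
    split_ifs with h1 h2 h3
    · omega
    · rfl
    · rfl
    · rfl

variable {n lam}

lemma wA_h (hlam : lam = Complex.exp (2 * Real.pi * I / n)) (heven : Even n) :
    wAFun n lam ((n/2 : ℕ) : ZMod n) = 0 := by
  rw [wAFun, neg_h heven, zet_h hlam heven]; ring

lemma aFun_symm (j : ZMod n) : aFunC n lam ν₀ ν₁ v (-j) = aFunC n lam ν₀ ν₁ v j := by
  rw [aFunC, aFunC]
  have hiff : (Even n ∧ -j = ((n/2 : ℕ) : ZMod n)) ↔ (Even n ∧ j = ((n/2 : ℕ) : ZMod n)) := by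
    constructor <;> rintro ⟨he, hj⟩ <;> refine ⟨he, ?_⟩
    · rw [← neg_h he, neg_inj] at hj; exact hj
    · rw [hj, neg_h he]
  by_cases hc : Even n ∧ j = ((n/2 : ℕ) : ZMod n)
  · rw [if_pos hc, if_pos (hiff.mpr hc)]
  · rw [if_neg hc, if_neg (fun hc' => hc (hiff.mp hc')), vv_symm]

lemma sum_a_wA (hlam : lam = Complex.exp (2 * Real.pi * I / n)) :
    ∑ k : ZMod n, aFunC n lam ν₀ ν₁ v k * wAFun n lam k = AvalC n lam v := by
  rw [AvalC, ← sub_eq_zero, ← Finset.sum_sub_distrib]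
  apply Finset.sum_eq_zero
  intro k _
  by_cases hk : Even n ∧ k = ((n/2 : ℕ) : ZMod n)
  · rw [hk.2, wA_h hlam hk.1]; ring
  · rw [aFunC, if_neg hk]; ring

lemma sum_eps_a_wA (hlam : lam = Complex.exp (2 * Real.pi * I / n)) :
    ∑ k : ZMod n, (-1:ℂ)^k.val * aFunC n lam ν₀ ν₁ v k * wAFun n lam k = BvalC n lam v := by
  rw [BvalC, ← sub_eq_zero, ← Finset.sum_sub_distrib]
  apply Finset.sum_eq_zero
  intro k _
  by_cases hk : Even n ∧ k = ((n/2 : ℕ) : ZMod n)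
  · rw [hk.2, wA_h hlam hk.1]; ring
  · rw [aFunC, if_neg hk]; ring

lemma comboA (hlam : lam = Complex.exp (2 * Real.pi * I / n)) :
    phiC n lam ν₀ ν₁ v (Qelt n lam 0)
      + (phiC n lam ν₀ ν₁ v (Qelt n lam 1) + phiC n lam ν₀ ν₁ v (Qelt n lam (-1))) / 2
    = AvalC n lam v := by
  have hone := hone_of (n := n) hlam
  rw [phi_Q hone, phi_Q hone, phi_Q hone]
  simp only [phiC_of, fFunC_r]
  rw [← sum_a_wA (ν₀ := ν₀) (ν₁ := ν₁) (v := v) hlam,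
    ← Finset.sum_add_distrib, Finset.sum_div, ← Finset.sum_add_distrib]
  refine Finset.sum_congr rfl fun k _ => ?_
  rw [show -(k * (0 : ZMod n)) = 0 by ring, show -(k * (1 : ZMod n)) = -k by ring,
    show -(k * (-1 : ZMod n)) = k by ring, zet_zero]
  simp only [wAFun]
  ring

lemma comboB (hlam : lam = Complex.exp (2 * Real.pi * I / n)) (heven : Even n) :
    phiC n lam ν₀ ν₁ v (Qelt n lam ((n/2 : ℕ) : ZMod n))
      + (phiC n lam ν₀ ν₁ v (Qelt n lam (((n/2 : ℕ) : ZMod n) + 1))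
        + phiC n lam ν₀ ν₁ v (Qelt n lam (((n/2 : ℕ) : ZMod n) - 1))) / 2
    = BvalC n lam v := by
  have hone := hone_of (n := n) hlam
  rw [phi_Q hone, phi_Q hone, phi_Q hone]
  simp only [phiC_of, fFunC_r]
  rw [← sum_eps_a_wA (ν₀ := ν₀) (ν₁ := ν₁) (v := v) hlam,
    ← Finset.sum_add_distrib, Finset.sum_div, ← Finset.sum_add_distrib]
  refine Finset.sum_congr rfl fun k _ => ?_
  rw [show -(k * (((n/2 : ℕ) : ZMod n))) = (-k) * ((n/2 : ℕ) : ZMod n) by ring,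
    show -(k * (((n/2 : ℕ) : ZMod n) + 1)) = (-k) * ((n/2 : ℕ) : ZMod n) + -k by ring,
    show -(k * (((n/2 : ℕ) : ZMod n) - 1)) = (-k) * ((n/2 : ℕ) : ZMod n) + k by ring,
    zet_add hone, zet_add hone, zet_mul_h hlam heven, eps_neg hlam heven]
  simp only [wAFun]
  ring

lemma phiL_0 (hlam : lam = Complex.exp (2 * Real.pi * I / n)) (heven : Even n) :
    phiC n lam ν₀ ν₁ v (Lelt n lam 0)
      = -(n : ℂ) * ((ν₀+ν₁)/2) * AvalC n lam v := by
  have hone := hone_of (n := n) hlam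
  rw [phi_L hone]
  simp only [phiC_of, fFunC_sr]
  have key : ∀ k : ZMod n, zet n lam (k * 0) *
      (-((ν₀+ν₁)/2) * AvalC n lam v + (-1:ℂ)^(-k).val * ((ν₀-ν₁)/2) * BvalC n lam v)
      = -(((ν₀+ν₁)/2) * AvalC n lam v)
        + (-1:ℂ)^k.val * (((ν₀-ν₁)/2) * BvalC n lam v) := by
    intro k
    rw [mul_zero, zet_zero, eps_neg hlam heven]
    ring
  rw [Finset.sum_congr rfl (fun k _ => key k), Finset.sum_add_distrib,
    Finset.sum_const, ← Finset.sum_mul, sum_eps heven, Finset.card_univ, ZMod.card,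
    nsmul_eq_mul]
  ring

lemma phiL_h (hlam : lam = Complex.exp (2 * Real.pi * I / n)) (heven : Even n) :
    phiC n lam ν₀ ν₁ v (Lelt n lam ((n/2 : ℕ) : ZMod n))
      = (n : ℂ) * ((ν₀-ν₁)/2) * BvalC n lam v := by
  have hone := hone_of (n := n) hlam
  rw [phi_L hone]
  simp only [phiC_of, fFunC_sr]
  have key : ∀ k : ZMod n, zet n lam (k * ((n/2 : ℕ) : ZMod n)) *
      (-((ν₀+ν₁)/2) * AvalC n lam v + (-1:ℂ)^(-k).val * ((ν₀-ν₁)/2) * BvalC n lam v)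
      = (-1:ℂ)^k.val * (-(((ν₀+ν₁)/2) * AvalC n lam v))
        + ((ν₀-ν₁)/2) * BvalC n lam v := by
    intro k
    rw [zet_mul_h hlam heven, eps_neg hlam heven]
    linear_combination (((ν₀-ν₁)/2) * BvalC n lam v) * eps_sq k
  rw [Finset.sum_congr rfl (fun k _ => key k), Finset.sum_add_distrib,
    Finset.sum_const, ← Finset.sum_mul, sum_eps heven, Finset.card_univ, ZMod.card,
    nsmul_eq_mul]
  ring

lemma phiC_admissible (hodd : Odd n → ν₀ = ν₁)
    (hlam : lam = Complex.exp (2 * Real.pi * I / n)) :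
    Admissible n lam ν₀ ν₁ (phiC n lam ν₀ ν₁ v) := by
  have hone := hone_of (n := n) hlam
  refine ⟨?_, ?_, ?_⟩
  · -- class function
    intro g g'
    rw [phiC_of, phiC_of]
    cases g' with
    | r m =>
      cases g with
      | r j =>
        rw [show r m * r j * (r m)⁻¹ = r j from by
          rw [show (r m)⁻¹ = r (-m) from rfl, r_mul_r, r_mul_r]; ring_nf]
      | sr j =>
        rw [show r m * sr j * (r m)⁻¹ = sr (j - m - m) from by
          rw [show (r m)⁻¹ = r (-m) from rfl, r_mul_sr, sr_mul_r]; ring_nf,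
          fFunC_sr, fFunC_sr]
        by_cases heven : Even n
        · rw [show j - m - m = j + -m + -m by ring, eps_add hlam heven,
            eps_add hlam heven]
          have := eps_sq (n := n) (-m)
          linear_combination ((-1:ℂ)^j.val * ((ν₀-ν₁)/2) * BvalC n lam v) * this
        · rw [hodd (Nat.odd_iff.mpr (Nat.not_even_iff.mp heven))]
          ring
    | sr m =>
      cases g with
      | r j =>
        rw [show sr m * r j * (sr m)⁻¹ = r (-j) from by
          rw [show (sr m)⁻¹ = sr m from rfl, sr_mul_r, sr_mul_sr]; ring_nf,
          fFunC_r, fFunC_r, aFun_symm]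
      | sr j =>
        rw [show sr m * sr j * (sr m)⁻¹ = sr (m - j + m) from by
          rw [show (sr m)⁻¹ = sr m from rfl, sr_mul_sr, r_mul_sr]; ring_nf,
          fFunC_sr, fFunC_sr]
        by_cases heven : Even n
        · rw [show m - j + m = -j + m + m by ring, eps_add hlam heven,
            eps_add hlam heven, eps_neg hlam heven]
          have := eps_sq (n := n) m
          linear_combination ((-1:ℂ)^j.val * ((ν₀-ν₁)/2) * BvalC n lam v) * this
        · rw [hodd (Nat.odd_iff.mpr (Nat.not_even_iff.mp heven))]
          ring
  · -- strT
    intro k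
    rw [phiC_of, fFunC_sr, comboA (ν₀ := ν₀) (ν₁ := ν₁) (v := v) hlam]
    by_cases heven : Even n
    · rw [comboB (ν₀ := ν₀) (ν₁ := ν₁) (v := v) hlam heven, eps_neg hlam heven]
    · rw [hodd (Nat.odd_iff.mpr (Nat.not_even_iff.mp heven))]
      ring
  · -- strS2
    intro heven
    rw [phiC_of, fFunC_r, map_sub, map_smul, map_smul,
      phiL_0 (ν₀ := ν₀) (ν₁ := ν₁) (v := v) hlam heven,
      phiL_h (ν₀ := ν₀) (ν₁ := ν₁) (v := v) hlam heven,
      aFunC, if_pos ⟨heven, rfl⟩, smul_eq_mul, smul_eq_mul]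
    ring

lemma phiC_rep (hn : 1 ≤ n) (i : Fin ((n+1)/2)) :
    phiC n lam ν₀ ν₁ v (of ℂ _ (r ((i : ℕ) : ZMod n))) = v i := by
  have him : (i : ℕ) < n := lt_of_lt_of_le i.2 (by omega)
  have hval : (((i : ℕ) : ZMod n)).val = (i : ℕ) := ZMod.val_cast_of_lt him
  have hcond : ¬(Even n ∧ ((i : ℕ) : ZMod n) = ((n/2 : ℕ) : ZMod n)) := by
    rintro ⟨he, hjh⟩
    have h1 : (((i : ℕ) : ZMod n)).val = n/2 := by rw [hjh, h_val he]
    have h2 : n % 2 = 0 := Nat.even_iff.mp he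
    have hi2 := i.2
    omega
  have hpos : (((i : ℕ) : ZMod n)).val < (n+1)/2 := by rw [hval]; exact i.2
  rw [phiC_of, fFunC_r, aFunC, if_neg hcond, vvFun, dif_pos hpos]
  have : (⟨(((i : ℕ) : ZMod n)).val, hpos⟩ : Fin ((n+1)/2)) = i := Fin.ext hval
  exact congrArg v this

end Constr

section Assemble
variable (n : ℕ) [NeZero n] (lam ν₀ ν₁ : ℂ)

noncomputable def Smod : Submodule ℂ (MonoidAlgebra ℂ (DihedralGroup n) →ₗ[ℂ] ℂ) where
  carrier := {φ | Admissible n lam ν₀ ν₁ φ}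
  add_mem' := by
    rintro φ ψ ⟨a1, a2, a3⟩ ⟨b1, b2, b3⟩
    refine ⟨fun g g' => ?_, fun k => ?_, fun he => ?_⟩
    · simp only [LinearMap.add_apply, a1 g g', b1 g g']
    · simp only [LinearMap.add_apply]; rw [a2 k, b2 k]; ring
    · simp only [LinearMap.add_apply]; rw [a3 he, b3 he]; ring
  zero_mem' := by
    refine ⟨fun g g' => rfl, fun k => ?_, fun he => ?_⟩
    · simp only [LinearMap.zero_apply]; ring
    · simp only [LinearMap.zero_apply]; ring
  smul_mem' := by
    rintro c φ ⟨a1, a2, a3⟩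
    refine ⟨fun g g' => ?_, fun k => ?_, fun he => ?_⟩
    · simp only [LinearMap.smul_apply, a1 g g']
    · simp only [LinearMap.smul_apply, smul_eq_mul]; rw [a2 k]; ring
    · simp only [LinearMap.smul_apply, smul_eq_mul]; rw [a3 he]; ring

noncomputable def Emap : Smod n lam ν₀ ν₁ →ₗ[ℂ] (Fin ((n+1)/2) → ℂ) where
  toFun σ := fun i => (σ : MonoidAlgebra ℂ (DihedralGroup n) →ₗ[ℂ] ℂ)
    (of ℂ _ (r ((i : ℕ) : ZMod n)))
  map_add' σ τ := rfl
  map_smul' c σ := rfl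

variable {n lam ν₀ ν₁}

lemma rep_determined (hodd : Odd n → ν₀ = ν₁)
    (hlam : lam = Complex.exp (2 * Real.pi * I / n))
    (σ : MonoidAlgebra ℂ (DihedralGroup n) →ₗ[ℂ] ℂ)
    (hσ : Admissible n lam ν₀ ν₁ σ)
    (h0 : ∀ i : Fin ((n+1)/2), σ (of ℂ _ (r ((i : ℕ) : ZMod n))) = 0) :
    σ = 0 := by
  apply vanish_lemma hodd hlam σ hσ
  intro j hj
  by_cases hjv : j.val < (n+1)/2
  · have := h0 ⟨j.val, hjv⟩
    rwa [show (((⟨j.val, hjv⟩ : Fin ((n+1)/2)) : ℕ) : ZMod n) = j from val_natCast j] at this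
  · have hj0 : j ≠ 0 := by
      intro h
      apply hjv
      rw [h, ZMod.val_zero]
      have := NeZero.ne n
      omega
    have hvn : (-j).val = n - j.val := by rw [ZMod.neg_val, if_neg hj0]
    have hv0 : j.val ≠ 0 := fun h => hj0 (ZMod.val_eq_zero j |>.mp h)
    have hvlt : j.val < n := ZMod.val_lt j
    have hneg : (-j).val < (n+1)/2 := by
      by_cases he : Even n
      · have hne : j.val ≠ n/2 := by
          intro hh
          exact hj he (by
            apply ZMod.val_injective
            rw [hh, h_val he])
        have h2 : n % 2 = 0 := Nat.even_iff.mp he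
        omega
      · have h2 : n % 2 = 1 := Nat.odd_iff.mp (Nat.odd_iff.mpr (Nat.not_even_iff.mp he))
        omega
    have hconj := hσ.1 (r j) (sr 0)
    have helt : sr 0 * r j * (sr 0)⁻¹ = r (-j) := by
      rw [show (sr (0 : ZMod n))⁻¹ = sr 0 from rfl, sr_mul_r, sr_mul_sr]; ring_nf
    rw [helt] at hconj
    rw [← hconj]
    have := h0 ⟨(-j).val, hneg⟩
    rwa [show (((⟨(-j).val, hneg⟩ : Fin ((n+1)/2)) : ℕ) : ZMod n) = -j from val_natCast (-j)]
      at this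

end Assemble

/-- Every admissible functional (class function satisfying (strT), (strS2)) is
determined by its values on the rotations `S_j`, `j ≠ n/2`, and the space of such
functionals has dimension `⌊(n+1)/2⌋`. -/
theorem supertrace_count_I2n (n : ℕ) (hn : 1 ≤ n) [NeZero n] (ν₀ ν₁ : ℂ)
    (hodd : Odd n → ν₀ = ν₁)
    (lam : ℂ) (hlam : lam = Complex.exp (2 * Real.pi * I / n)) :
    (∀ φ ψ : MonoidAlgebra ℂ (DihedralGroup n) →ₗ[ℂ] ℂ,
      Admissible n lam ν₀ ν₁ φ → Admissible n lam ν₀ ν₁ ψ →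
      (∀ j : ZMod n, (Even n → j ≠ ((n / 2 : ℕ) : ZMod n)) →
        φ (of ℂ _ (r j)) = ψ (of ℂ _ (r j))) →
      φ = ψ) ∧
    ∃ S : Submodule ℂ (MonoidAlgebra ℂ (DihedralGroup n) →ₗ[ℂ] ℂ),
      (∀ φ, φ ∈ S ↔ Admissible n lam ν₀ ν₁ φ) ∧
      Module.finrank ℂ S = (n + 1) / 2 := by
  constructor
  · intro φ ψ hφ hψ hagree
    have hmem : φ - ψ ∈ Smod n lam ν₀ ν₁ := Submodule.sub_mem _ hφ hψ
    have h0 := vanish_lemma hodd hlam (φ - ψ) hmem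
      (fun j hj => by simp only [LinearMap.sub_apply, hagree j hj, sub_self])
    exact sub_eq_zero.mp h0
  · refine ⟨Smod n lam ν₀ ν₁, fun φ => Iff.rfl, ?_⟩
    have hbij : Function.Bijective (Emap n lam ν₀ ν₁) := by
      constructor
      · intro σ τ hστ
        apply Subtype.ext
        apply sub_eq_zero.mp
        apply rep_determined hodd hlam _ (Submodule.sub_mem _ σ.2 τ.2)
        intro i
        have := congrFun hστ i
        simp only [Emap, LinearMap.coe_mk, AddHom.coe_mk] at this
        simp only [LinearMap.sub_apply, this, sub_self]
      · intro w
        refine ⟨⟨phiC n lam ν₀ ν₁ w, phiC_admissible ν₀ ν₁ w hodd hlam⟩, ?_⟩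
        funext i
        show phiC n lam ν₀ ν₁ w (of ℂ _ (r ((i : ℕ) : ZMod n))) = w i
        exact phiC_rep ν₀ ν₁ w hn i
    have e := LinearEquiv.ofBijective (Emap n lam ν₀ ν₁) hbij
    rw [LinearEquiv.finrank_eq e, Module.finrank_pi, Fintype.card_fin]
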